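/- Let F, G : A \to \mathbb{R} on a finite nonempty set A with softmax distributions \pi \propto exp(F), \tilde\pi \propto exp(G). If sup_a |F(a)-G(a)| \le \epsilon, then both KL divergences D_{KL}(\pi \| \tilde\pi) and D_{KL}(\tilde\pi \| \pi) are at most 3\epsilon. -/
import Mathlib

open Finset

lemma softmax_kl_aux {A : Type*} [Fintype A] [Nonempty A] (F G : A → ℝ) (ε : ℝ)
    (hFG : ∀ a, |F a - G a| ≤ ε) :
    (∑ a : A, (Real.exp (F a) / ∑ a' : A, Real.exp (F a')) *
      Real.log ((Real.exp (F a) / ∑ a' : A, Real.exp (F a')) /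
        (Real.exp (G a) / ∑ a' : A, Real.exp (G a')))) ≤ 2 * ε := by
  set ZF := ∑ a' : A, Real.exp (F a') with hZF
  set ZG := ∑ a' : A, Real.exp (G a') with hZG
  have hZFpos : 0 < ZF := Finset.sum_pos (fun a _ => Real.exp_pos _) Finset.univ_nonempty
  have hZGpos : 0 < ZG := Finset.sum_pos (fun a _ => Real.exp_pos _) Finset.univ_nonempty
  have hεnn : 0 ≤ ε := le_trans (abs_nonneg _) (hFG (Classical.arbitrary A))
  have hlog : ∀ a : A, Real.log ((Real.exp (F a) / ZF) / (Real.exp (G a) / ZG))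
      = (F a - G a) + (Real.log ZG - Real.log ZF) := by
    intro a
    rw [Real.log_div (by positivity) (by positivity), Real.log_div (by positivity) hZFpos.ne',
      Real.log_div (by positivity) hZGpos.ne', Real.log_exp, Real.log_exp]
    ring
  have hsum1 : ∑ a : A, Real.exp (F a) / ZF = 1 := by
    rw [← Finset.sum_div, ← hZF, div_self hZFpos.ne']
  have hC : Real.log ZG - Real.log ZF ≤ ε := by
    have hZle : ZG ≤ Real.exp ε * ZF := by
      rw [hZG, hZF, Finset.mul_sum]
      apply Finset.sum_le_sum
      intro a _
      rw [← Real.exp_add]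
      exact Real.exp_le_exp.mpr (by have := abs_le.mp (hFG a); linarith)
    have := Real.log_le_log hZGpos hZle
    rw [Real.log_mul (Real.exp_pos ε).ne' hZFpos.ne', Real.log_exp] at this
    linarith
  calc ∑ a : A, (Real.exp (F a) / ZF) *
        Real.log ((Real.exp (F a) / ZF) / (Real.exp (G a) / ZG))
      = ∑ a : A, ((Real.exp (F a) / ZF) * (F a - G a)
          + (Real.exp (F a) / ZF) * (Real.log ZG - Real.log ZF)) := by
        apply Finset.sum_congr rfl; intro a _; rw [hlog a]; ring
    _ = (∑ a : A, (Real.exp (F a) / ZF) * (F a - G a))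
          + (Real.log ZG - Real.log ZF) := by
        rw [Finset.sum_add_distrib, ← Finset.sum_mul, hsum1, one_mul]
    _ ≤ ε + ε := by
        gcongr
        · calc ∑ a : A, (Real.exp (F a) / ZF) * (F a - G a)
              ≤ ∑ a : A, (Real.exp (F a) / ZF) * ε := by
                apply Finset.sum_le_sum; intro a _
                exact mul_le_mul_of_nonneg_left (by have := abs_le.mp (hFG a); linarith)
                  (by positivity)
            _ = ε := by rw [← Finset.sum_mul, hsum1, one_mul]
    _ = 2 * ε := by ring

theorem stmt_6 {A : Type*} [Fintype A] [Nonempty A] (F G : A → ℝ) (ε : ℝ)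
    (hFG : ∀ a, |F a - G a| ≤ ε)
    (π πt : A → ℝ)
    (hπ : ∀ a, π a = Real.exp (F a) / ∑ a' : A, Real.exp (F a'))
    (hπt : ∀ a, πt a = Real.exp (G a) / ∑ a' : A, Real.exp (G a')) :
    (∑ a : A, π a * Real.log (π a / πt a)) ≤ 3 * ε ∧
    (∑ a : A, πt a * Real.log (πt a / π a)) ≤ 3 * ε := by
  have hεnn : 0 ≤ ε := le_trans (abs_nonneg _) (hFG (Classical.arbitrary A))
  have hGF : ∀ a, |G a - F a| ≤ ε := fun a => (abs_sub_comm (G a) (F a)) ▸ hFG a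
  constructor
  · calc ∑ a : A, π a * Real.log (π a / πt a)
        ≤ 2 * ε := by simp only [hπ, hπt]; exact softmax_kl_aux F G ε hFG
      _ ≤ 3 * ε := by linarith
  · calc ∑ a : A, πt a * Real.log (πt a / π a)
        ≤ 2 * ε := by simp only [hπ, hπt]; exact softmax_kl_aux G F ε hGF
      _ ≤ 3 * ε := by linarith
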